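/- For every level datum L, the integer B_L is even. -/

import Mathlib

open Finset

/-- The ramification order of a level datum: the least common denominator of its
elements, i.e. the lcm of the denominators (`ram ∅ = 1`). -/
def ram (L : Finset ℚ) : ℕ := L.lcm Rat.den

/-- The least common denominator `d` of the "initial segment" of `L` consisting of the
elements `≥ k` (the elements come in decreasing order `k₀ > k₁ > ⋯`). -/
def segLcm (L : Finset ℚ) (k : ℚ) : ℕ := (L.filter (fun x => k ≤ x)).lcm Rat.den

/-- A level datum: a finite set of positive rationals such that the least common
denominators `d₀, d₁, …` of the initial segments (for the decreasing order) are all `≥ 2`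
and form a strictly increasing sequence.  (Since the `d_j` are increasing, requiring
`d_j ≥ 2` for all `j` is equivalent to `d₀ ≥ 2`, i.e. to the largest element not being
an integer.) -/
def IsLevelDatum (L : Finset ℚ) : Prop :=
  (∀ k ∈ L, 0 < k) ∧
  (∀ k ∈ L, 2 ≤ segLcm L k) ∧
  (∀ k ∈ L, ∀ k' ∈ L, k' < k → segLcm L k < segLcm L k')

/-- The largest level of `L` (junk value `0` for `L = ∅`). -/
def maxLevel (L : Finset ℚ) : ℚ := WithBot.unbotD 0 L.max

/-- The numerator `s(k) := k · Ram(L) ∈ ℤ` of a level `k` of `L`. -/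
def numer (L : Finset ℚ) (k : ℚ) : ℤ := (k * (ram L : ℚ)).num

/-- `σ := k₀ · Ram(L) ∈ ℤ`, the numerator of the largest level. -/
def sigma0 (L : Finset ℚ) : ℤ := numer L (maxLevel L)

/-- `gcd(s(x) for x ∈ s, Ram L)` : the gcd of `Ram L` together with the numerators of the
elements of a subset `s ⊆ L`. -/
def gSeg (L : Finset ℚ) (s : Finset ℚ) : ℕ :=
  Nat.gcd (ram L) (s.gcd (fun x => (numer L x).natAbs))

/-- The quantity
`B_L = (r − (s₀,r))·s₀ + Σᵢ ((s₀,…,s_{i−1},r) − (s₀,…,s_i,r))·s_i − r² + 1`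
(`B_∅ = 0`), equal to the dimension of the elementary wild character variety. -/
def B (L : Finset ℚ) : ℤ :=
  (∑ k ∈ L, ((gSeg L (L.filter (fun x => k < x)) : ℤ)
      - (gSeg L (L.filter (fun x => k ≤ x)) : ℤ)) * numer L k)
    - (ram L : ℤ) ^ 2 + 1

/-- A level datum is locally minimal at infinity if it is empty, or its largest level is
`< 1` or `> 2`. -/
def LocallyMinimal (L : Finset ℚ) : Prop :=
  L = ∅ ∨ maxLevel L < 1 ∨ 2 < maxLevel L

/-- Rescaling of a level datum by a factor `c`, removing the integer elements. -/
def rescale (L : Finset ℚ) (c : ℚ) : Finset ℚ :=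
  (L.image (fun k => c * k)).filter (fun x => x.den ≠ 1)

/-- The local simplification map `S_∞` on level data: if the largest level `k₀` satisfies
`1 < k₀ < 2`, rescale all the levels by `ρ/(σ−ρ)` (where `ρ = Ram L`, `σ = k₀·ρ`) and
remove the integer levels; otherwise do nothing. -/
def Sinf (L : Finset ℚ) : Finset ℚ :=
  if 1 < maxLevel L ∧ maxLevel L < 2 then
    rescale L ((ram L : ℚ) / ((sigma0 L : ℚ) - (ram L : ℚ)))
  else L

section Aux

lemma ram_pos (L : Finset ℚ) : 0 < ram L := by
  rw [ram, Nat.pos_iff_ne_zero]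
  intro h
  rw [Finset.lcm_eq_zero_iff] at h
  obtain ⟨q, _, hq⟩ := h
  exact q.den_nz hq

lemma den_dvd_ram {L : Finset ℚ} {k : ℚ} (hk : k ∈ L) : k.den ∣ ram L :=
  Finset.dvd_lcm hk

lemma numer_cast {L : Finset ℚ} {k : ℚ} (hk : k ∈ L) :
    ((numer L k : ℤ) : ℚ) = k * (ram L : ℚ) := by
  rw [numer]
  apply Rat.coe_int_num_of_den_eq_one
  have hden : ((k.den : ℤ) : ℚ) ≠ 0 := by exact_mod_cast k.den_nz
  have h1 : k * (ram L : ℚ) = ((k.num * ram L : ℤ) : ℚ) / ((k.den : ℤ) : ℚ) := by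
    rw [eq_div_iff hden]
    push_cast
    rw [mul_comm (k : ℚ) _, mul_assoc, Rat.mul_den_eq_num, mul_comm]
  rw [h1, Rat.den_div_intCast_eq_one_iff]
  · exact_mod_cast Dvd.dvd.mul_left (Int.natCast_dvd_natCast.mpr (den_dvd_ram hk)) k.num
  · exact_mod_cast k.den_nz

lemma gSeg_univ (L : Finset ℚ) : gSeg L L = 1 := by
  set g := gSeg L L with hg
  have hgr : g ∣ ram L := Nat.gcd_dvd_left _ _
  have hgpos : 0 < g := Nat.pos_of_dvd_of_pos hgr (ram_pos L)
  set N := ram L / g with hN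
  have hNg : N * g = ram L := Nat.div_mul_cancel hgr
  have hNpos : 0 < N := by
    rcases Nat.eq_zero_or_pos N with h | h
    · exfalso; rw [h, zero_mul] at hNg; exact absurd hNg.symm (ram_pos L).ne'
    · exact h
  have hrN : ram L ∣ N := by
    rw [ram]
    apply Finset.lcm_dvd
    intro k hk
    have h2 : g ∣ (numer L k).natAbs :=
      Nat.dvd_trans (Nat.gcd_dvd_right _ _) (Finset.gcd_dvd hk)
    have hgs : (g : ℤ) ∣ numer L k := Int.natCast_dvd.mpr h2
    obtain ⟨m, hm⟩ := hgs
    have hgQ : (g : ℚ) ≠ 0 := by positivity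
    have hNQ : (N : ℚ) ≠ 0 := by positivity
    have h3 : k * ((N : ℚ) * g) = (m : ℚ) * g := by
      have h4 : k * ((ram L : ℚ)) = (m : ℚ) * g := by
        rw [← numer_cast hk, hm]; push_cast; ring
      rw [← hNg] at h4; push_cast at h4; linarith [h4]
    have hkm : k = (m : ℚ) / (N : ℚ) := by
      rw [eq_div_iff hNQ]
      apply mul_right_cancel₀ hgQ
      rw [mul_assoc]; exact h3
    have hkm' : k = Rat.divInt m (N : ℤ) := by
      rw [Rat.divInt_eq_div, hkm]; norm_cast
    have h5 := Rat.den_dvd m (N : ℤ)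
    rw [← hkm'] at h5
    exact_mod_cast h5
  have hNr : N ∣ ram L := ⟨g, hNg.symm⟩
  have hNeq : N = ram L := Nat.dvd_antisymm hNr hrN
  rw [hNeq] at hNg
  nlinarith [ram_pos L]


lemma telescope (f : Finset ℚ → ℤ) :
    ∀ (T : Finset ℚ), ∑ k ∈ T, (f (T.filter (fun x => k < x)) - f (T.filter (fun x => k ≤ x)))
      = f ∅ - f T := by
  intro T
  induction T using Finset.strongInduction with
  | _ T ih =>
    rcases T.eq_empty_or_nonempty with rfl | hne
    · simp
    · set m := T.min' hne with hm
      have hmT : m ∈ T := T.min'_mem hne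
      have hlt : ∀ x ∈ T, x ≠ m → m < x := fun x hx hxm =>
        lt_of_le_of_ne (T.min'_le x hx) (Ne.symm hxm)
      have hfilter_le : T.filter (fun x => m ≤ x) = T := by
        apply Finset.filter_true_of_mem
        intro x hx; exact T.min'_le x hx
      have hfilter_lt : T.filter (fun x => m < x) = T.erase m := by
        ext x
        simp only [Finset.mem_filter, Finset.mem_erase]
        constructor
        · rintro ⟨hx, hlx⟩; exact ⟨ne_of_gt hlx, hx⟩
        · rintro ⟨hxm, hx⟩; exact ⟨hx, hlt x hx hxm⟩
      have hrest : ∀ k ∈ T.erase m,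
          (T.filter (fun x => k < x) = (T.erase m).filter (fun x => k < x)) ∧
          (T.filter (fun x => k ≤ x) = (T.erase m).filter (fun x => k ≤ x)) := by
        intro k hk
        obtain ⟨hkm, hkT⟩ := Finset.mem_erase.mp hk
        have hmk : m < k := hlt k hkT hkm
        constructor <;>
        · ext x
          simp only [Finset.mem_filter, Finset.mem_erase]
          constructor
          · rintro ⟨hx, h⟩
            refine ⟨⟨?_, hx⟩, h⟩
            rintro rfl
            first
              | exact absurd (lt_trans hmk h) (lt_irrefl m)
              | exact absurd (lt_of_lt_of_le hmk h) (lt_irrefl m)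
          · rintro ⟨⟨_, hx⟩, h⟩; exact ⟨hx, h⟩
      rw [← Finset.sum_erase_add _ _ hmT, hfilter_le, hfilter_lt]
      have := ih (T.erase m) (Finset.erase_ssubset hmT)
      rw [Finset.sum_congr rfl (fun k hk => by rw [(hrest k hk).1, (hrest k hk).2]), this]
      ring


lemma cast_even2 {n : ℕ} (h : Even n) : (n : ZMod 2) = 0 := by
  obtain ⟨m, rfl⟩ := h
  push_cast
  rw [show ((m : ZMod 2) + m) = 2 * m by ring, show (2 : ZMod 2) = 0 from rfl, zero_mul]

lemma cast_odd2 {n : ℕ} (h : Odd n) : (n : ZMod 2) = 1 := by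
  obtain ⟨m, rfl⟩ := h
  push_cast
  rw [show ((2 : ZMod 2) * m + 1) = 2 * m + 1 by ring, show (2 : ZMod 2) = 0 from rfl]
  ring

lemma cast_odd2' {s : ℤ} (h : Odd s) : (s : ZMod 2) = 1 := by
  obtain ⟨m, rfl⟩ := h
  push_cast
  rw [show ((2 : ZMod 2) * m + 1) = 2 * m + 1 by ring, show (2 : ZMod 2) = 0 from rfl]
  ring

lemma key2 (g' : ℕ) (s : ℤ) :
    ((g' : ZMod 2) - (Nat.gcd s.natAbs g' : ZMod 2)) * (s : ZMod 2)
      = (g' : ZMod 2) - (Nat.gcd s.natAbs g' : ZMod 2) := by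
  set g := Nat.gcd s.natAbs g' with hgdef
  rcases Nat.even_or_odd g' with h' | h'
  · rcases Nat.even_or_odd g with h | h
    · rw [cast_even2 h', cast_even2 h]; ring
    · have hs : Odd s := by
        rcases Int.even_or_odd s with hs | hs
        · exfalso
          apply (Nat.not_even_iff_odd.mpr h)
          exact (even_iff_two_dvd).mpr (Nat.dvd_gcd
            ((even_iff_two_dvd).mp (Int.natAbs_even.mpr hs))
            ((even_iff_two_dvd).mp h'))
        · exact hs
      rw [cast_even2 h', cast_odd2 h, cast_odd2' hs]; ring
  · have h : Odd g := by
      rcases Nat.even_or_odd g with h | h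
      · exfalso
        apply Nat.not_even_iff_odd.mpr h'
        exact (even_iff_two_dvd).mpr
          (dvd_trans ((even_iff_two_dvd).mp h) (Nat.gcd_dvd_right _ _))
      · exact h
    rw [cast_odd2 h', cast_odd2 h]; ring

lemma gSeg_insert (L : Finset ℚ) (k : ℚ) (t : Finset ℚ) :
    gSeg L (insert k t) = Nat.gcd (numer L k).natAbs (gSeg L t) := by
  rw [gSeg, gSeg, Finset.gcd_insert]
  have h1 : GCDMonoid.gcd ((numer L k).natAbs) (t.gcd fun x => (numer L x).natAbs)
      = Nat.gcd ((numer L k).natAbs) (t.gcd fun x => (numer L x).natAbs) := rfl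
  rw [h1, Nat.gcd_comm (ram L), Nat.gcd_assoc, Nat.gcd_comm _ (ram L)]

lemma gSeg_empty (L : Finset ℚ) : gSeg L ∅ = ram L := by
  rw [gSeg, Finset.gcd_empty, Nat.gcd_zero_right]

lemma filter_le_insert {L : Finset ℚ} {k : ℚ} (hk : k ∈ L) :
    L.filter (fun x => k ≤ x) = insert k (L.filter (fun x => k < x)) := by
  ext x
  simp only [Finset.mem_filter, Finset.mem_insert]
  constructor
  · rintro ⟨hx, h⟩
    rcases eq_or_lt_of_le h with rfl | h
    · exact Or.inl rfl
    · exact Or.inr ⟨hx, h⟩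
  · rintro (rfl | ⟨hx, h⟩)
    · exact ⟨hk, le_refl _⟩
    · exact ⟨hx, le_of_lt h⟩

end Aux

/-- for every level datum `L`, the integer `B_L` is even. -/
theorem stmt_6 (L : Finset ℚ) (hL : IsLevelDatum L) : Even (B L) := by
  rw [even_iff_two_dvd]
  have hcast := ZMod.intCast_zmod_eq_zero_iff_dvd (B L) 2
  rw [show ((2:ℕ):ℤ) = 2 from rfl] at hcast
  rw [← hcast]
  rw [B]
  push_cast
  have hterm : ∀ k ∈ L,
      ((gSeg L (L.filter (fun x => k < x)) : ZMod 2)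
        - (gSeg L (L.filter (fun x => k ≤ x)) : ZMod 2)) * ((numer L k : ℤ) : ZMod 2)
      = ((gSeg L (L.filter (fun x => k < x)) : ZMod 2)
        - (gSeg L (L.filter (fun x => k ≤ x)) : ZMod 2)) := by
    intro k hk
    rw [filter_le_insert hk, gSeg_insert]
    exact key2 _ _
  rw [Finset.sum_congr rfl hterm]
  have h2 : (∑ k ∈ L, ((gSeg L (L.filter (fun x => k < x)) : ZMod 2)
        - (gSeg L (L.filter (fun x => k ≤ x)) : ZMod 2)))
      = (ram L : ZMod 2) - 1 := by
    have h3 := congrArg (fun z : ℤ => (z : ZMod 2))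
      (telescope (fun s => (gSeg L s : ℤ)) L)
    push_cast at h3
    rw [h3, gSeg_empty, gSeg_univ]
    push_cast
    ring
  rw [h2]
  have h4 : ∀ x : ZMod 2, x - 1 - x ^ 2 + 1 = 0 := by decide
  exact h4 _
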